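/- Let E be a real inner product space and let x, y, z ∈ E be nonzero vectors. Define the line angle ∠(u,v) = arccos(|⟨u,v⟩| / (‖u‖ ‖v‖)) for nonzero u, v. Then the triangle inequality holds: ∠(x,y) ≤ ∠(x,z) + ∠(z,y). -/

import Mathlib

open RealInnerProductSpace

/-- The unsigned line angle between two nonzero vectors:
∠(u,v) = arccos(|⟨u,v⟩| / (‖u‖ ‖v‖)). -/
noncomputable def lineAngle {E : Type*} [NormedAddCommGroup E] [InnerProductSpace ℝ E]
    (u v : E) : ℝ :=
  Real.arccos (|⟪u, v⟫| / (‖u‖ * ‖v‖))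

lemma arccos_antitone : Antitone Real.arccos := by
  intro a b hab
  unfold Real.arccos
  have := Real.monotone_arcsin hab
  linarith

/-- Key normalized inequality via orthogonal decomposition along `z`. -/
lemma key_ineq {E : Type*} [NormedAddCommGroup E] [InnerProductSpace ℝ E]
    (x y z : E) (hx : x ≠ 0) (hy : y ≠ 0) (hz : z ≠ 0) :
    |⟪x, z⟫| / (‖x‖ * ‖z‖) * (|⟪z, y⟫| / (‖z‖ * ‖y‖)) -
      Real.sqrt (1 - (|⟪x, z⟫| / (‖x‖ * ‖z‖)) ^ 2) *
      Real.sqrt (1 - (|⟪z, y⟫| / (‖z‖ * ‖y‖)) ^ 2) ≤ |⟪x, y⟫| / (‖x‖ * ‖y‖) := by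
  set X := ‖x‖ with hX
  set Y := ‖y‖ with hYdef
  set Z := ‖z‖ with hZdef
  have hX0 : (0:ℝ) < X := norm_pos_iff.mpr hx
  have hY0 : (0:ℝ) < Y := norm_pos_iff.mpr hy
  have hZ0 : (0:ℝ) < Z := norm_pos_iff.mpr hz
  set P := (⟪x, z⟫ : ℝ) with hP
  set Q := (⟪z, y⟫ : ℝ) with hQ
  set R := (⟪x, y⟫ : ℝ) with hR
  set x' := x - (P / Z ^ 2) • z with hx'
  set y' := y - (Q / Z ^ 2) • z with hy'
  have hzz : (⟪z, z⟫ : ℝ) = Z ^ 2 := by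
    rw [real_inner_self_eq_norm_sq]
  have hZ2 : (Z:ℝ) ^ 2 ≠ 0 := by positivity
  have hinner : (⟪x', y'⟫ : ℝ) = R - P * Q / Z ^ 2 := by
    simp only [hx', hy', inner_sub_left, inner_sub_right, inner_smul_left, inner_smul_right,
      RCLike.conj_to_real]
    rw [hzz, hP, hQ, hR, real_inner_comm z x]
    field_simp
    ring
  have hnx' : ‖x'‖ ^ 2 = X ^ 2 - P ^ 2 / Z ^ 2 := by
    rw [← real_inner_self_eq_norm_sq]
    simp only [hx', inner_sub_left, inner_sub_right, inner_smul_left, inner_smul_right,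
      RCLike.conj_to_real]
    rw [hzz, real_inner_self_eq_norm_sq, hP, hX, real_inner_comm z x]
    field_simp
    ring
  have hny' : ‖y'‖ ^ 2 = Y ^ 2 - Q ^ 2 / Z ^ 2 := by
    rw [← real_inner_self_eq_norm_sq]
    simp only [hy', inner_sub_left, inner_sub_right, inner_smul_left, inner_smul_right,
      RCLike.conj_to_real]
    rw [hzz, real_inner_self_eq_norm_sq, hQ, hYdef, real_inner_comm y z]
    field_simp
    ring
  have hcs : |R - P * Q / Z ^ 2| ≤ ‖x'‖ * ‖y'‖ := by
    rw [← hinner]; exact abs_real_inner_le_norm x' y'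
  -- sqrt identities
  have hs1 : Real.sqrt (1 - (|P| / (X * Z)) ^ 2) = ‖x'‖ / X := by
    have h1 : 1 - (|P| / (X * Z)) ^ 2 = (‖x'‖ / X) ^ 2 := by
      rw [div_pow, div_pow, hnx', sq_abs]
      field_simp
    rw [h1, Real.sqrt_sq (by positivity)]
  have hs2 : Real.sqrt (1 - (|Q| / (Z * Y)) ^ 2) = ‖y'‖ / Y := by
    have h1 : 1 - (|Q| / (Z * Y)) ^ 2 = (‖y'‖ / Y) ^ 2 := by
      rw [div_pow, div_pow, hny', sq_abs]
      field_simp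
    rw [h1, Real.sqrt_sq (by positivity)]
  rw [hs1, hs2]
  -- main estimate: |P|*|Q|/Z^2 ≤ |R| + ‖x'‖‖y'‖
  have hmain : |P| * |Q| / Z ^ 2 ≤ |R| + ‖x'‖ * ‖y'‖ := by
    have h1 : |P * Q / Z ^ 2| ≤ |R| + |P * Q / Z ^ 2 - R| := by
      calc |P * Q / Z ^ 2| = |R + (P * Q / Z ^ 2 - R)| := by ring_nf
        _ ≤ |R| + |P * Q / Z ^ 2 - R| := abs_add_le _ _
    have h2 : |P * Q / Z ^ 2 - R| = |R - P * Q / Z ^ 2| := abs_sub_comm _ _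
    have h3 : |P * Q / Z ^ 2| = |P| * |Q| / Z ^ 2 := by
      rw [abs_div, abs_mul, abs_of_nonneg (by positivity : (0:ℝ) ≤ Z ^ 2)]
    linarith [hcs]
  -- divide through by X*Y
  have e1 : |P| / (X * Z) * (|Q| / (Z * Y)) = (|P| * |Q| / Z ^ 2) / (X * Y) := by
    rw [div_mul_div_comm, div_div]
    congr 1
    ring
  have e2 : ‖x'‖ / X * (‖y'‖ / Y) = (‖x'‖ * ‖y'‖) / (X * Y) := by
    field_simp
  rw [e1, e2, ← sub_div, div_le_div_iff₀ (by positivity) (by positivity)]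
  have hfin : |P| * |Q| / Z ^ 2 - ‖x'‖ * ‖y'‖ ≤ |R| := by linarith
  nlinarith [mul_pos hX0 hY0]

/-- The triangle inequality for the line angle between nonzero vectors in a real
inner product space: ∠(x,y) ≤ ∠(x,z) + ∠(z,y). -/
theorem lineAngle_triangle {E : Type*} [NormedAddCommGroup E] [InnerProductSpace ℝ E]
    (x y z : E) (hx : x ≠ 0) (hy : y ≠ 0) (hz : z ≠ 0) :
    lineAngle x y ≤ lineAngle x z + lineAngle z y := by
  set a := |⟪x, z⟫| / (‖x‖ * ‖z‖) with ha
  set b := |⟪z, y⟫| / (‖z‖ * ‖y‖) with hb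
  set c := |⟪x, y⟫| / (‖x‖ * ‖y‖) with hc
  have hX0 : (0:ℝ) < ‖x‖ := norm_pos_iff.mpr hx
  have hY0 : (0:ℝ) < ‖y‖ := norm_pos_iff.mpr hy
  have hZ0 : (0:ℝ) < ‖z‖ := norm_pos_iff.mpr hz
  have ha0 : 0 ≤ a := by positivity
  have hb0 : 0 ≤ b := by positivity
  have hc0 : 0 ≤ c := by positivity
  have ha1 : a ≤ 1 := by
    rw [ha, div_le_one (by positivity)]
    exact abs_real_inner_le_norm x z
  have hb1 : b ≤ 1 := by
    rw [hb, div_le_one (by positivity)]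
    exact abs_real_inner_le_norm z y
  have hc1 : c ≤ 1 := by
    rw [hc, div_le_one (by positivity)]
    exact abs_real_inner_le_norm x y
  show Real.arccos c ≤ Real.arccos a + Real.arccos b
  by_cases h : Real.pi / 2 ≤ Real.arccos a + Real.arccos b
  · exact le_trans (Real.arccos_le_pi_div_two.mpr hc0) h
  push_neg at h
  have hA0 : 0 ≤ Real.arccos a := Real.arccos_nonneg a
  have hB0 : 0 ≤ Real.arccos b := Real.arccos_nonneg b
  have hsum : Real.arccos a + Real.arccos b ≤ Real.pi := by
    have := Real.pi_pos; linarith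
  have hcos : Real.cos (Real.arccos a + Real.arccos b) ≤ c := by
    rw [Real.cos_add, Real.cos_arccos (by linarith) ha1, Real.cos_arccos (by linarith) hb1,
      Real.sin_arccos, Real.sin_arccos]
    exact key_ineq x y z hx hy hz
  calc Real.arccos c ≤ Real.arccos (Real.cos (Real.arccos a + Real.arccos b)) :=
        arccos_antitone hcos
    _ = Real.arccos a + Real.arccos b := Real.arccos_cos (by linarith) hsum
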